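/- Let F be a family of subsets of V and let w, w' ∈ V⁺ be nonempty finite words with w ≤_F w'. Then for every finite word u ∈ V*, wu ≤_F w'u. -/

import Mathlib

variable {V : Type*}

/-- One step of the score/accumulator update: reading letter `v` after having
score/accumulator pair `s` for the set `F`. -/
def mgStep [DecidableEq V] (F : Finset V) (s : ℕ × Finset V) (v : V) : ℕ × Finset V :=
  if v ∈ F then
    if s.2 = F.erase v then (s.1 + 1, (∅ : Finset V)) else (s.1, insert v s.2)
  else (0, (∅ : Finset V))

/-- `scoreAcc F w = (Score_F(w), Acc_F(w))` for a (nonempty) finite word `w`. -/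
def scoreAcc [DecidableEq V] (F : Finset V) (w : List V) : ℕ × Finset V :=
  w.foldl (mgStep F) (0, ∅)

/-- `w ≤_𝓕 w'`. -/
def ScoreLe [DecidableEq V] (𝓕 : Set (Finset V)) (w w' : List V) : Prop :=
  w.getLast? = w'.getLast? ∧
    ∀ F ∈ 𝓕,
      (scoreAcc F w).1 < (scoreAcc F w').1 ∨
        ((scoreAcc F w).1 = (scoreAcc F w').1 ∧ (scoreAcc F w).2 ⊆ (scoreAcc F w').2)

/-- `w =_𝓕 w'`. -/
def ScoreEq [DecidableEq V] (𝓕 : Set (Finset V)) (w w' : List V) : Prop :=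
  ScoreLe 𝓕 w w' ∧ ScoreLe 𝓕 w' w

/-- Invariant: the accumulator is contained in `F`, and equals `F` only if `F = ∅`. -/
def MgInv [DecidableEq V] (F : Finset V) (s : ℕ × Finset V) : Prop :=
  s.2 ⊆ F ∧ (s.2 = F → F = ∅)

/-- The order on score/accumulator pairs. -/
def MgR (s s' : ℕ × Finset V) : Prop :=
  s.1 < s'.1 ∨ (s.1 = s'.1 ∧ s.2 ⊆ s'.2)

lemma mgInv_step [DecidableEq V] (F : Finset V) (s : ℕ × Finset V) (v : V)
    (h : MgInv F s) : MgInv F (mgStep F s v) := by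
  unfold mgStep
  split_ifs with hv he
  · exact ⟨Finset.empty_subset F, fun hF => hF.symm⟩
  · refine ⟨Finset.insert_subset hv h.1, fun hF => ?_⟩
    exfalso
    by_cases hvs : v ∈ s.2
    · have h2 : s.2 = F := by rwa [Finset.insert_eq_self.mpr hvs] at hF
      exact absurd hv (by rw [h.2 h2]; simp)
    · exact he (by rw [← hF, Finset.erase_insert hvs])
  · exact ⟨Finset.empty_subset F, fun hF => hF.symm⟩

lemma mgInv_foldl [DecidableEq V] (F : Finset V) (u : List V) (s : ℕ × Finset V)
    (h : MgInv F s) : MgInv F (u.foldl (mgStep F) s) := by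
  induction u generalizing s with
  | nil => exact h
  | cons v t ih => exact ih _ (mgInv_step F s v h)

lemma mgInv_scoreAcc [DecidableEq V] (F : Finset V) (w : List V) :
    MgInv F (scoreAcc F w) :=
  mgInv_foldl F w (0, ∅) ⟨Finset.empty_subset F, fun hF => hF.symm⟩

lemma mgR_step [DecidableEq V] (F : Finset V) (s s' : ℕ × Finset V) (v : V)
    (hs : MgInv F s) (hs' : MgInv F s') (h : MgR s s') :
    MgR (mgStep F s v) (mgStep F s' v) := by
  unfold mgStep
  split_ifs with hv he he'
  · -- both accumulators equal F.erase v
    rcases h with h | ⟨h1, _⟩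
    · exact Or.inl (by simpa using h)
    · exact Or.inr ⟨by simp [h1], by simp⟩
  · -- s.2 = F.erase v, s'.2 ≠ F.erase v
    rcases h with h | ⟨h1, h2⟩
    · rcases lt_or_eq_of_le (Nat.succ_le_of_lt h) with h' | h'
      · exact Or.inl h'
      · exact Or.inr ⟨h', Finset.empty_subset _⟩
    · exfalso
      -- F.erase v ⊆ s'.2 ⊆ F, s'.2 ≠ F.erase v ⇒ s'.2 = F ⇒ F = ∅, contra v ∈ F
      have hsub : F.erase v ⊆ s'.2 := he ▸ h2
      by_cases hvs : v ∈ s'.2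
      · have : F ⊆ s'.2 := by
          intro x hx
          by_cases hxv : x = v
          · exact hxv ▸ hvs
          · exact hsub (Finset.mem_erase.mpr ⟨hxv, hx⟩)
        have hF : s'.2 = F := le_antisymm hs'.1 this
        exact absurd hv (by rw [hs'.2 hF]; simp)
      · exact he' (le_antisymm (by
          intro x hx
          exact Finset.mem_erase.mpr ⟨fun hxv => hvs (hxv ▸ hx), hs'.1 hx⟩) hsub)
  · -- s.2 ≠ F.erase v, s'.2 = F.erase v
    rcases h with h | ⟨h1, _⟩
    · exact Or.inl (Nat.lt_succ_of_lt h)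
    · exact Or.inl (by simp [h1])
  · -- both differ from F.erase v
    rcases h with h | ⟨h1, h2⟩
    · exact Or.inl h
    · exact Or.inr ⟨h1, Finset.insert_subset_insert v h2⟩
  · exact Or.inr ⟨rfl, subset_rfl⟩

lemma mgR_foldl [DecidableEq V] (F : Finset V) (u : List V) (s s' : ℕ × Finset V)
    (hs : MgInv F s) (hs' : MgInv F s') (h : MgR s s') :
    MgR (u.foldl (mgStep F) s) (u.foldl (mgStep F) s') := by
  induction u generalizing s s' with
  | nil => exact h
  | cons v t ih =>
      exact ih _ _ (mgInv_step F s v hs) (mgInv_step F s' v hs') (mgR_step F s s' v hs hs' h)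

/-- If `w ≤_𝓕 w'` (for nonempty words `w, w'`), then
`w·u ≤_𝓕 w'·u` for every finite word `u`. -/
theorem scoreLe_append_right [DecidableEq V] (𝓕 : Set (Finset V)) (w w' : List V)
    (hw : w ≠ []) (hw' : w' ≠ []) (h : ScoreLe 𝓕 w w') (u : List V) :
    ScoreLe 𝓕 (w ++ u) (w' ++ u) := by
  obtain ⟨hlast, hsc⟩ := h
  constructor
  · rcases eq_or_ne u [] with rfl | hu
    · simpa using hlast
    · simp [List.getLast?_append, hlast]
  · intro F hF
    have := mgR_foldl F u (scoreAcc F w) (scoreAcc F w')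
      (mgInv_scoreAcc F w) (mgInv_scoreAcc F w') (hsc F hF)
    simpa [scoreAcc, List.foldl_append, MgR] using this
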